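/- For any unitary U on ℂ^N, (U ⊗ I^{⊗(N−1)}) |S_N⟩ = (det U) · (I ⊗ (U†)^{⊗(N−1)}) |S_N⟩, where |S_N⟩ is the N-level singlet in (ℂ^N)^{⊗N}. -/

import Mathlib

/-- The `N`-level singlet `(1/√N!) Σ_{σ∈S_N} sgn(σ) e_{σ(1)} ⊗ ⋯ ⊗ e_{σ(N)}`. -/
noncomputable def singlet (N : ℕ) : EuclideanSpace ℂ (Fin N → Fin N) :=
  ((Real.sqrt N.factorial : ℂ))⁻¹ • ∑ σ : Equiv.Perm (Fin N),
    ((Equiv.Perm.sign σ : ℤ) : ℂ) • EuclideanSpace.single (⇑σ) (1 : ℂ)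

/-- The action of `I ⊗ ⋯ ⊗ U ⊗ ⋯ ⊗ I` (the matrix `U` acting on the `k`-th tensor
factor only) on `(ℂ^d)^{⊗N}`. -/
noncomputable def applyAt {d N : ℕ} (k : Fin N) (U : Matrix (Fin d) (Fin d) ℂ)
    (ψ : EuclideanSpace ℂ (Fin N → Fin d)) : EuclideanSpace ℂ (Fin N → Fin d) :=
  WithLp.toLp 2 fun f => ∑ a : Fin d, U (f k) a * ψ (Function.update f k a)

/-- The action of `V` on every tensor factor except the `k`-th (where the identity
acts) on `(ℂ^d)^{⊗N}`. -/
noncomputable def applyExcept {d N : ℕ} (k : Fin N) (V : Matrix (Fin d) (Fin d) ℂ)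
    (ψ : EuclideanSpace ℂ (Fin N → Fin d)) : EuclideanSpace ℂ (Fin N → Fin d) :=
  WithLp.toLp 2 fun f => ∑ g : Fin N → Fin d,
    if g k = f k then (∏ i ∈ Finset.univ.erase k, V (f i) (g i)) * ψ g else 0


lemma det_row {N : ℕ} (M : Matrix (Fin N) (Fin N) ℂ) :
    M.det = ∑ σ : Equiv.Perm (Fin N), ((Equiv.Perm.sign σ : ℤ) : ℂ) * ∏ i, M i (σ i) := by
  rw [← Matrix.det_transpose, Matrix.det_apply]
  simp [Matrix.transpose_apply, Units.smul_def]

lemma singlet_apply (N : ℕ) (g : Fin N → Fin N) :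
    singlet N g = ((Real.sqrt N.factorial : ℂ))⁻¹ *
      ∑ σ : Equiv.Perm (Fin N), ((Equiv.Perm.sign σ : ℤ) : ℂ) * (if g = ⇑σ then 1 else 0) := by
  have h : (∑ σ : Equiv.Perm (Fin N), ((Equiv.Perm.sign σ : ℤ) : ℂ) • EuclideanSpace.single (⇑σ) (1:ℂ)) g
      = ∑ σ : Equiv.Perm (Fin N), (((Equiv.Perm.sign σ : ℤ) : ℂ) • EuclideanSpace.single (⇑σ) (1:ℂ)) g :=
    by rw [WithLp.ofLp_sum, Finset.sum_apply]
  unfold singlet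
  rw [PiLp.smul_apply, h]
  simp [EuclideanSpace.single_apply, smul_eq_mul]

lemma updkey {N : ℕ} (k : Fin N) (U : Matrix (Fin N) (Fin N) ℂ) (f : Fin N → Fin N)
    (σ : Equiv.Perm (Fin N)) :
    (∑ a, U (f k) a * (if Function.update f k a = ⇑σ then (1:ℂ) else 0)) =
      ∏ i, (if i = k then U (f k) (σ i) else if f i = σ i then (1:ℂ) else 0) := by
  classical
  by_cases hP : ∀ i, i ≠ k → f i = σ i
  · have h1 : ∀ a : Fin N, (Function.update f k a = ⇑σ) ↔ a = σ k := by
      intro a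
      rw [Function.update_eq_iff]
      constructor
      · rintro ⟨h, -⟩; exact h
      · intro h; exact ⟨h, fun x hx => hP x hx⟩
    simp only [h1, mul_ite, mul_one, mul_zero]
    rw [Finset.sum_ite_eq' Finset.univ (σ k) (fun a => U (f k) a)]
    rw [← Finset.mul_prod_erase Finset.univ _ (Finset.mem_univ k)]
    rw [Finset.prod_eq_one (by
      intro i hi
      have hik := Finset.ne_of_mem_erase hi
      simp [hik, hP i hik])]
    simp
  · push_neg at hP
    obtain ⟨i, hik, hfi⟩ := hP
    have hL : ∀ a, Function.update f k a ≠ ⇑σ := by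
      intro a h
      have := congrFun h i
      rw [Function.update_of_ne hik] at this
      exact hfi this
    rw [Finset.prod_eq_zero (Finset.mem_univ i) (by simp [hik, hfi])]
    simp [hL]

lemma L1 {N : ℕ} (k : Fin N) (U : Matrix (Fin N) (Fin N) ℂ) (f : Fin N → Fin N) :
    applyAt k U (singlet N) f = ((Real.sqrt N.factorial : ℂ))⁻¹ *
      (Matrix.of fun i j => if i = k then U (f k) j else if f i = j then (1:ℂ) else 0).det := by
  rw [det_row]
  show (∑ a, U (f k) a * singlet N (Function.update f k a)) = _
  calc (∑ a, U (f k) a * singlet N (Function.update f k a))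
      = ∑ a, ∑ σ : Equiv.Perm (Fin N), ((Real.sqrt N.factorial : ℂ))⁻¹ *
          (((Equiv.Perm.sign σ : ℤ) : ℂ) * (U (f k) a * (if Function.update f k a = ⇑σ then 1 else 0))) := by
        refine Finset.sum_congr rfl fun a _ => ?_
        rw [singlet_apply, Finset.mul_sum, Finset.mul_sum]
        exact Finset.sum_congr rfl fun σ _ => by ring
    _ = ∑ σ : Equiv.Perm (Fin N), ((Real.sqrt N.factorial : ℂ))⁻¹ *
          (((Equiv.Perm.sign σ : ℤ) : ℂ) * ∑ a, U (f k) a * (if Function.update f k a = ⇑σ then 1 else 0)) := by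
        rw [Finset.sum_comm]
        exact Finset.sum_congr rfl fun σ _ => by rw [Finset.mul_sum, Finset.mul_sum]
    _ = _ := by
        rw [Finset.mul_sum]
        refine Finset.sum_congr rfl fun σ _ => ?_
        rw [updkey]
        ring_nf
        rfl

lemma L2 {N : ℕ} (k : Fin N) (V : Matrix (Fin N) (Fin N) ℂ) (f : Fin N → Fin N) :
    applyExcept k V (singlet N) f = ((Real.sqrt N.factorial : ℂ))⁻¹ *
      (Matrix.of fun i j => if i = k then (if f k = j then (1:ℂ) else 0) else V (f i) j).det := by
  rw [det_row]
  show (∑ g : Fin N → Fin N, if g k = f k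
      then (∏ i ∈ Finset.univ.erase k, V (f i) (g i)) * singlet N g else 0) = _
  calc (∑ g : Fin N → Fin N, if g k = f k
        then (∏ i ∈ Finset.univ.erase k, V (f i) (g i)) * singlet N g else 0)
      = ∑ g : Fin N → Fin N, ∑ σ : Equiv.Perm (Fin N), ((Real.sqrt N.factorial : ℂ))⁻¹ *
          (((Equiv.Perm.sign σ : ℤ) : ℂ) *
            ((if g k = f k then (∏ i ∈ Finset.univ.erase k, V (f i) (g i)) else 0) *
              (if g = ⇑σ then 1 else 0))) := by
        refine Finset.sum_congr rfl fun g _ => ?_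
        rw [show (if g k = f k then (∏ i ∈ Finset.univ.erase k, V (f i) (g i)) * singlet N g else 0)
            = (if g k = f k then (∏ i ∈ Finset.univ.erase k, V (f i) (g i)) else 0) * singlet N g by
          split <;> simp]
        rw [singlet_apply, Finset.mul_sum, Finset.mul_sum]
        exact Finset.sum_congr rfl fun σ _ => by ring
    _ = ∑ σ : Equiv.Perm (Fin N), ((Real.sqrt N.factorial : ℂ))⁻¹ *
          (((Equiv.Perm.sign σ : ℤ) : ℂ) *
            (if σ k = f k then (∏ i ∈ Finset.univ.erase k, V (f i) (σ i)) else 0)) := by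
        rw [Finset.sum_comm]
        refine Finset.sum_congr rfl fun σ _ => ?_
        simp [mul_ite, mul_one, mul_zero, Finset.sum_ite_eq', ← Finset.mul_sum]
    _ = _ := by
        rw [Finset.mul_sum]
        refine Finset.sum_congr rfl fun σ _ => ?_
        congr 1
        rw [← Finset.mul_prod_erase Finset.univ _ (Finset.mem_univ k)]
        have hpr : (∏ i ∈ Finset.univ.erase k,
            (Matrix.of fun i j => if i = k then (if f k = j then (1:ℂ) else 0) else V (f i) j) i (σ i))
            = ∏ i ∈ Finset.univ.erase k, V (f i) (σ i) := by
          refine Finset.prod_congr rfl fun i hi => ?_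
          simp [Finset.ne_of_mem_erase hi]
        rw [hpr]
        simp only [Matrix.of_apply, if_pos rfl]
        by_cases h : σ k = f k
        · simp [h]
        · have h' : ¬ f k = σ k := fun hh => h hh.symm
          simp [h, h']

/-- For any unitary `U` on `ℂ^N`,
`(U ⊗ I^{⊗(N−1)}) |S_N⟩ = (det U) · (I ⊗ (U†)^{⊗(N−1)}) |S_N⟩`. -/
theorem singlet_first_factor_unitary_transfer
    {N : ℕ} (hN : 0 < N) (U : Matrix (Fin N) (Fin N) ℂ)
    (hU : U ∈ Matrix.unitaryGroup (Fin N) ℂ) :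
    applyAt ⟨0, hN⟩ U (singlet N) =
      U.det • applyExcept ⟨0, hN⟩ U.conjTranspose (singlet N) := by
  classical
  have hUU : U.conjTranspose * U = 1 := by
    have := Matrix.mem_unitaryGroup_iff'.mp hU
    simpa [Matrix.star_eq_conjTranspose] using this
  ext f
  have hsm : (U.det • applyExcept ⟨0, hN⟩ U.conjTranspose (singlet N)) f
      = U.det * applyExcept ⟨0, hN⟩ U.conjTranspose (singlet N) f := rfl
  rw [hsm, L1 ⟨0, hN⟩ U f, L2 ⟨0, hN⟩ U.conjTranspose f]
  have hMM : (Matrix.of fun i j => if i = (⟨0, hN⟩ : Fin N) then U (f ⟨0, hN⟩) j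
        else if f i = j then (1:ℂ) else 0)
      = (Matrix.of fun i j => if i = (⟨0, hN⟩ : Fin N) then (if f ⟨0, hN⟩ = j then (1:ℂ) else 0)
          else U.conjTranspose (f i) j) * U := by
    ext i j
    rw [Matrix.mul_apply]
    by_cases hik : i = (⟨0, hN⟩ : Fin N)
    · subst hik
      simp [ite_mul, Finset.sum_ite_eq]
    · simp only [Matrix.of_apply, if_neg hik]
      have h2 : ∑ l, U.conjTranspose (f i) l * U l j = (U.conjTranspose * U) (f i) j :=
        (Matrix.mul_apply).symm
      rw [h2, hUU, Matrix.one_apply]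
  rw [hMM, Matrix.det_mul]
  ring
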